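/- Let (A, B) be an exact 3-separation of a matroid M and let L be a line (rank-2 flat) with ⊓(A, L) = 2 = ⊓(B, L) and ⊓(A, B) = 2 in a matroid M″ extending M. Then for every subset Z of A: ⊓(Z, L) = ⊓(Z, B) = ⊓(Z, B ∪ L). -/

import Mathlib

set_option maxHeartbeats 1600000


open Set

variable {α : Type*}

/-- The rank of a set in a matroid: the supremum of cardinalities of independent subsets. -/
noncomputable def mRk (M : Matroid α) (X : Set α) : ℕ :=
  sSup (Set.ncard '' {I | M.Indep I ∧ I ⊆ X})

/-- Local connectivity `⊓(S, T) = r(S) + r(T) − r(S ∪ T)`. -/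
noncomputable def mConn (M : Matroid α) (S T : Set α) : ℤ :=
  (mRk M S : ℤ) + (mRk M T : ℤ) - (mRk M (S ∪ T) : ℤ)

/-- A circuit: a minimal dependent set. -/
def mCircuit (M : Matroid α) (C : Set α) : Prop :=
  M.Dep C ∧ ∀ D, D ⊂ C → ¬ M.Dep D

/-- `M'` is a single-element extension of `M` by the element `p`:
`p` is a new element, the ground set grows by `p`, and deleting `p` recovers `M`. -/
def ExtBy (M' M : Matroid α) (p : α) : Prop :=
  p ∉ M.E ∧ M'.E = insert p M.E ∧ M'.restrict M.E = M

/-- `M'` is an extension of `M` by the two new elements `x` and `y`. -/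
def ExtBy2 (M' M : Matroid α) (x y : α) : Prop :=
  x ∉ M.E ∧ y ∉ M.E ∧ x ≠ y ∧ M'.E = insert x (insert y M.E) ∧ M'.restrict M.E = M

/-- `(A, B)` is an exact 3-separation of `M`: a partition of the ground set with
`r(A) + r(B) − r(M) = 2`. -/
def Exact3Sep (M : Matroid α) (A B : Set α) : Prop :=
  Disjoint A B ∧ A ∪ B = M.E ∧
    (mRk M A : ℤ) + (mRk M B : ℤ) - (mRk M M.E : ℤ) = 2

/-- An `A`-strand relative to the separation `(A, B)`: a minimal subset `S` of `A` with
`⊓(S, B) = 1`. -/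
def Strand (M : Matroid α) (A B S : Set α) : Prop :=
  S ⊆ A ∧ mConn M S B = 1 ∧ ∀ S', S' ⊂ S → mConn M S' B ≠ 1

namespace ConnAux

open Matroid

variable {M : Matroid α} {I J X Y : Set α}

lemma exists_coe {m : ℕ∞} (h : m ≠ ⊤) : ∃ n : ℕ, m = (n : ℕ∞) :=
  ⟨m.toNat, (ENat.coe_toNat h).symm⟩

/-- Extended rank: supremum of `encard`s of independent subsets. -/
noncomputable def eR (M : Matroid α) (X : Set α) : ℕ∞ :=
  sSup (Set.encard '' {I | M.Indep I ∧ I ⊆ X})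

lemma le_eR (h : M.Indep I) (hIX : I ⊆ X) : I.encard ≤ eR M X :=
  le_sSup ⟨I, ⟨h, hIX⟩, rfl⟩

lemma eR_le (c : ℕ∞) (h : ∀ I, M.Indep I → I ⊆ X → I.encard ≤ c) : eR M X ≤ c := by
  refine sSup_le ?_
  rintro - ⟨I, ⟨hI, hIX⟩, rfl⟩
  exact h I hI hIX

lemma basis'_encard_eq (h1 : M.IsBasis' I X) (h2 : M.IsBasis' J X) : I.encard = J.encard :=
  (Matroid.isBase_restrict_iff'.2 h1).encard_eq_encard_of_isBase (Matroid.isBase_restrict_iff'.2 h2)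

lemma eR_eq_of_basis' (hIX : M.IsBasis' I X) : eR M X = I.encard := by
  refine le_antisymm (eR_le _ fun J hJ hJX => ?_) (le_eR hIX.indep hIX.subset)
  obtain ⟨J', hJ', hJJ'⟩ := hJ.subset_isBasis'_of_subset hJX
  exact (Set.encard_mono hJJ').trans_eq (basis'_encard_eq hJ' hIX)

lemma eR_mono (M : Matroid α) (h : X ⊆ Y) : eR M X ≤ eR M Y :=
  eR_le _ fun I hI hIX => le_eR hI (hIX.trans h)

lemma eR_indep (h : M.Indep I) : eR M I = I.encard :=
  eR_eq_of_basis' h.isBasis_self.isBasis'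

lemma eR_closure (M : Matroid α) (X : Set α) : eR M (M.closure X) = eR M X := by
  obtain ⟨I, hI⟩ := M.exists_isBasis' X
  rw [eR_eq_of_basis' hI.isBasis_closure_right.isBasis', eR_eq_of_basis' hI]

lemma eR_congr (h : M.closure X = M.closure Y) : eR M X = eR M Y := by
  rw [← eR_closure M X, h, eR_closure]

lemma eR_union_closure (M : Matroid α) (X Y : Set α) :
    eR M (X ∪ M.closure Y) = eR M (X ∪ Y) :=
  eR_congr (M.closure_union_closure_right_eq X Y)

lemma eR_inter_ground (M : Matroid α) (X : Set α) : eR M (X ∩ M.E) = eR M X := by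
  refine le_antisymm (eR_mono M inter_subset_left) (eR_le _ fun I hI hIX => ?_)
  exact le_eR hI (subset_inter hIX hI.subset_ground)

lemma eR_submod (M : Matroid α) (X Y : Set α) :
    eR M (X ∪ Y) + eR M (X ∩ Y) ≤ eR M X + eR M Y := by
  have hXE : eR M (X ∩ M.E) = eR M X := eR_inter_ground M X
  have hYE : eR M (Y ∩ M.E) = eR M Y := eR_inter_ground M Y
  set X' := X ∩ M.E with hX'
  set Y' := Y ∩ M.E with hY'
  have hU : eR M (X ∪ Y) = eR M (X' ∪ Y') := by
    rw [← eR_inter_ground M (X ∪ Y), union_inter_distrib_right]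
  have hI' : eR M (X ∩ Y) = eR M (X' ∩ Y') := by
    rw [← eR_inter_ground M (X ∩ Y)]
    congr 1
    rw [hX', hY']; ext z; simp; tauto
  rw [hU, hI', ← hXE, ← hYE]
  have hX'E : X' ⊆ M.E := inter_subset_right
  have hY'E : Y' ⊆ M.E := inter_subset_right
  obtain ⟨I, hI⟩ := M.exists_isBasis (X' ∩ Y') (inter_subset_left.trans hX'E)
  obtain ⟨J, hJ, hIJ⟩ := hI.indep.subset_isBasis_of_subset (hI.subset.trans inter_subset_left) hX'E
  obtain ⟨K, hK, hJK⟩ := hJ.indep.subset_isBasis_of_subset (hJ.subset.trans subset_union_left)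
    (union_subset hX'E hY'E)
  have hKX : K ∩ X' = J := hJ.inter_eq_of_subset_indep hJK hK.indep
  have hKXY : K ∩ (X' ∩ Y') = I := hI.inter_eq_of_subset_indep (hIJ.trans hJK) hK.indep
  have hKsub : K ∩ X' ∪ K ∩ Y' = K := by
    rw [← inter_union_distrib_left]
    exact inter_eq_self_of_subset_left hK.subset
  have hKint : (K ∩ X') ∩ (K ∩ Y') = I := by
    rw [← hKXY]; ext z; simp; tauto
  have hcard := Set.encard_union_add_encard_inter (K ∩ X') (K ∩ Y')
  rw [hKsub, hKint] at hcard
  -- hcard : K.encard + I.encard = (K ∩ X').encard + (K ∩ Y').encard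
  rw [eR_eq_of_basis' hK.isBasis', eR_eq_of_basis' hI.isBasis', hcard, hKX]
  gcongr
  · rw [eR_eq_of_basis' hJ.isBasis']
  · exact le_eR (hK.indep.inter_right Y') inter_subset_right

lemma eR_union_le (M : Matroid α) (X Y : Set α) : eR M (X ∪ Y) ≤ eR M X + eR M Y :=
  le_self_add.trans (eR_submod M X Y)

lemma mRk_eq_toNat (M : Matroid α) (X : Set α) : mRk M X = (eR M X).toNat := by
  rcases eq_or_ne (eR M X) ⊤ with h | h
  · rw [h, ENat.toNat_top, mRk]
    have hub : ¬ BddAbove (Set.ncard '' {I | M.Indep I ∧ I ⊆ X}) := by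
      rintro ⟨m, hm⟩
      have hlt : (m : ℕ∞) < eR M X := h ▸ (WithTop.coe_lt_top m)
      obtain ⟨c, ⟨I, ⟨hIind, hIX⟩, rfl⟩, hc⟩ := lt_sSup_iff.mp hlt
      obtain ⟨t, hts, ht⟩ := Set.exists_subset_encard_eq
        (show ((m + 1 : ℕ) : ℕ∞) ≤ I.encard by
          push_cast; exact Order.add_one_le_of_lt hc)
      have hmem : (m + 1) ∈ Set.ncard '' {I | M.Indep I ∧ I ⊆ X} :=
        ⟨t, ⟨hIind.subset hts, hts.trans hIX⟩, by rw [Set.ncard_def, ht, ENat.toNat_coe]⟩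
      have := hm hmem
      omega
    rw [csSup_of_not_bddAbove hub, csSup_empty]
    rfl
  · obtain ⟨n, hn⟩ := exists_coe h
    rw [hn, ENat.toNat_coe, mRk]
    obtain ⟨I₀, hI₀⟩ := M.exists_isBasis' X
    have hI₀card : I₀.encard = n := by rw [← eR_eq_of_basis' hI₀, hn]
    have hbound : ∀ m ∈ Set.ncard '' {I | M.Indep I ∧ I ⊆ X}, m ≤ n := by
      rintro - ⟨I, ⟨hIind, hIX⟩, rfl⟩
      have : I.encard ≤ (n : ℕ∞) := (le_eR hIind hIX).trans_eq hn
      rw [Set.ncard_def]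
      exact ENat.toNat_le_of_le_coe this
    refine le_antisymm (csSup_le ⟨0, ⟨∅, ⟨M.empty_indep, empty_subset X⟩, by simp⟩⟩ hbound) ?_
    refine le_csSup ⟨n, hbound⟩ ?_
    exact ⟨I₀, ⟨hI₀.indep, hI₀.subset⟩, by rw [Set.ncard_def, hI₀card, ENat.toNat_coe]⟩

lemma mConn_eq (M : Matroid α) (S T : Set α) :
    mConn M S T = ((eR M S).toNat : ℤ) + ((eR M T).toNat : ℤ) - ((eR M (S ∪ T)).toNat : ℤ) := by
  rw [mConn, mRk_eq_toNat, mRk_eq_toNat, mRk_eq_toNat]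

lemma closure_eq_closure_of (hXY : X ⊆ Y) (hle : eR M Y ≤ eR M X) (hfin : eR M Y ≠ ⊤) :
    M.closure X = M.closure Y := by
  obtain ⟨I, hI⟩ := M.exists_isBasis' X
  obtain ⟨J, hJ, hIJ⟩ := hI.indep.subset_isBasis'_of_subset (hI.subset.trans hXY)
  have hJI : J.encard ≤ I.encard := by
    rw [← eR_eq_of_basis' hI, ← eR_eq_of_basis' hJ]; exact hle
  have hfinJ : J.Finite := by
    rw [← Set.encard_ne_top_iff, ← eR_eq_of_basis' hJ]; exact hfin
  have hIJ' : I = J := hfinJ.eq_of_subset_of_encard_le' hIJ hJI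
  rw [← hI.closure_eq_closure, ← hJ.closure_eq_closure, hIJ']

lemma eR_union_ne_top (hX : eR M X ≠ ⊤) (hY : eR M Y ≠ ⊤) : eR M (X ∪ Y) ≠ ⊤ := by
  intro h
  have hle := eR_union_le M X Y
  rw [h, top_le_iff] at hle
  exact (WithTop.add_eq_top.mp hle).elim hX hY

end ConnAux

open ConnAux in
/-- With a guts line `L` for `(A, B)`, every `Z ⊆ A` satisfies
`⊓(Z, L) = ⊓(Z, B) = ⊓(Z, B ∪ L)`. -/
theorem conn_guts_line (M : Matroid α) (A B : Set α) (x y : α) (L : Set α)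
    (hAB : Disjoint A B) (hxy : x ≠ y) (hI : M.Indep {x, y})
    (hL : L = M.closure {x, y})
    (hconnAB : mConn M A B = 2) (hconnAL : mConn M A L = 2) (hconnBL : mConn M B L = 2)
    (Z : Set α) (hZ : Z ⊆ A) :
    mConn M Z L = mConn M Z B ∧ mConn M Z B = mConn M Z (B ∪ L) := by
  have heL : eR M L = ((2 : ℕ) : ℕ∞) := by
    rw [hL, eR_closure, eR_indep hI, Set.encard_pair hxy]; rfl
  have hLfin : eR M L ≠ ⊤ := by rw [heL]; exact WithTop.coe_ne_top
  rw [mConn_eq] at hconnAB hconnAL hconnBL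
  rw [mConn_eq, mConn_eq, mConn_eq]
  rcases eq_or_ne (eR M A) ⊤ with hA | hA
  · rcases eq_or_ne (eR M B) ⊤ with hB | hB
    · -- both infinite rank : contradiction with ⊓(A,B) = 2
      exfalso
      have hABtop : eR M (A ∪ B) = ⊤ := by
        have := eR_mono M (subset_union_left (s := A) (t := B))
        rw [hA] at this; exact top_le_iff.mp this
      rw [hA, hB, hABtop] at hconnAB
      simp only [ENat.toNat_top, ENat.toNat_coe] at hconnAB
      omega
    · -- A has infinite rank, B finite
      obtain ⟨b, hB'⟩ := exists_coe hB
      have hABtop : eR M (A ∪ B) = ⊤ := by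
        have := eR_mono M (subset_union_left (s := A) (t := B))
        rw [hA] at this; exact top_le_iff.mp this
      rw [hA, hB', hABtop] at hconnAB
      simp only [ENat.toNat_top, ENat.toNat_coe] at hconnAB
      have hb2 : b = 2 := by omega
      subst hb2
      -- rank of B ∪ L is 2
      have hBLfin : eR M (B ∪ L) ≠ ⊤ := eR_union_ne_top (by rw [hB']; exact WithTop.coe_ne_top) hLfin
      obtain ⟨nbl, hBL'⟩ := exists_coe hBLfin
      rw [hB', heL, hBL'] at hconnBL
      simp only [ENat.toNat_top, ENat.toNat_coe] at hconnBL
      have hnbl2 : nbl = 2 := by omega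
      subst hnbl2
      -- so B, L, B ∪ L all have the same closure
      have hclB : M.closure B = M.closure (B ∪ L) :=
        closure_eq_closure_of subset_union_left (le_of_eq (by rw [hBL', hB'])) hBLfin
      have hclL : M.closure L = M.closure (B ∪ L) :=
        closure_eq_closure_of subset_union_right (le_of_eq (by rw [hBL', heL])) hBLfin
      have hclBL : M.closure B = M.closure L := hclB.trans hclL.symm
      have hZB_ZL : eR M (Z ∪ B) = eR M (Z ∪ L) := by
        rw [← eR_union_closure M Z B, hclBL, eR_union_closure]
      have hZBL : eR M (Z ∪ (B ∪ L)) = eR M (Z ∪ B) := by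
        rw [← eR_union_closure M Z (B ∪ L), ← hclB, eR_union_closure]
      refine ⟨by rw [heL, hB', hZB_ZL], by rw [hBL', hB', hZBL]⟩
  · rcases eq_or_ne (eR M B) ⊤ with hB | hB
    · -- B has infinite rank, A finite
      obtain ⟨a, hA'⟩ := exists_coe hA
      have hABtop : eR M (A ∪ B) = ⊤ := by
        have := eR_mono M (subset_union_right (s := A) (t := B))
        rw [hB] at this; exact top_le_iff.mp this
      rw [hA', hB, hABtop] at hconnAB
      simp only [ENat.toNat_top, ENat.toNat_coe] at hconnAB
      have ha2 : a = 2 := by omega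
      subst ha2
      -- rank of A ∪ L is 2
      have hALfin : eR M (A ∪ L) ≠ ⊤ := eR_union_ne_top hA hLfin
      obtain ⟨nal, hAL'⟩ := exists_coe hALfin
      rw [hA', heL, hAL'] at hconnAL
      simp only [ENat.toNat_top, ENat.toNat_coe] at hconnAL
      have hnal2 : nal = 2 := by omega
      subst hnal2
      have hZL : eR M (Z ∪ L) = ((2 : ℕ) : ℕ∞) := by
        refine le_antisymm ?_ ?_
        · rw [← hAL']; exact eR_mono M (union_subset_union_left L hZ)
        · rw [← heL]; exact eR_mono M subset_union_right
      have hZBtop : eR M (Z ∪ B) = ⊤ := by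
        have := eR_mono M (subset_union_right (s := Z) (t := B))
        rw [hB] at this; exact top_le_iff.mp this
      have hBLtop : eR M (B ∪ L) = ⊤ := by
        have := eR_mono M (subset_union_left (s := B) (t := L))
        rw [hB] at this; exact top_le_iff.mp this
      have hZBLtop : eR M (Z ∪ (B ∪ L)) = ⊤ := by
        have := eR_mono M (show B ⊆ Z ∪ (B ∪ L) by intro t ht; exact Or.inr (Or.inl ht))
        rw [hB] at this; exact top_le_iff.mp this
      rw [heL, hZL, hB, hZBtop, hBLtop, hZBLtop]
      simp only [ENat.toNat_top, ENat.toNat_coe]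
      constructor <;> first | trivial | omega
    · -- both finite : the main case
      obtain ⟨a, hA'⟩ := exists_coe hA
      obtain ⟨b, hB'⟩ := exists_coe hB
      have hZfin : eR M Z ≠ ⊤ := ne_top_of_le_ne_top hA (eR_mono M hZ)
      have hABfin : eR M (A ∪ B) ≠ ⊤ := eR_union_ne_top hA hB
      have hALfin : eR M (A ∪ L) ≠ ⊤ := eR_union_ne_top hA hLfin
      have hBLfin : eR M (B ∪ L) ≠ ⊤ := eR_union_ne_top hB hLfin
      have hZLfin : eR M (Z ∪ L) ≠ ⊤ := eR_union_ne_top hZfin hLfin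
      have hZBfin : eR M (Z ∪ B) ≠ ⊤ := eR_union_ne_top hZfin hB
      have hZBLfin : eR M (Z ∪ (B ∪ L)) ≠ ⊤ := eR_union_ne_top hZfin hBLfin
      have hABLfin : eR M (A ∪ (B ∪ L)) ≠ ⊤ := eR_union_ne_top hA hBLfin
      obtain ⟨z, hZ'⟩ := exists_coe hZfin
      obtain ⟨nab, hAB'⟩ := exists_coe hABfin
      obtain ⟨nal, hAL'⟩ := exists_coe hALfin
      obtain ⟨nbl, hBL'⟩ := exists_coe hBLfin
      obtain ⟨zl, hZL'⟩ := exists_coe hZLfin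
      obtain ⟨zb, hZB'⟩ := exists_coe hZBfin
      obtain ⟨zbl, hZBL'⟩ := exists_coe hZBLfin
      obtain ⟨nabl, hABL'⟩ := exists_coe hABLfin
      rw [hA', hB', hAB'] at hconnAB
      simp only [ENat.toNat_top, ENat.toNat_coe] at hconnAB
      rw [hA', heL, hAL'] at hconnAL
      simp only [ENat.toNat_top, ENat.toNat_coe] at hconnAL
      rw [hB', heL, hBL'] at hconnBL
      simp only [ENat.toNat_top, ENat.toNat_coe] at hconnBL
      -- monotonicity facts
      have m1 : nab ≤ nabl := by
        have := eR_mono M (show A ∪ B ⊆ A ∪ (B ∪ L) by intro t ht; simp only [Set.mem_union] at ht ⊢; tauto)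
        rw [hAB', hABL'] at this; exact_mod_cast this
      have m2 : zb ≤ zbl := by
        have := eR_mono M (show Z ∪ B ⊆ Z ∪ (B ∪ L) by intro t ht; simp only [Set.mem_union] at ht ⊢; tauto)
        rw [hZB', hZBL'] at this; exact_mod_cast this
      -- submodularity instances
      have I1 : nabl + a ≤ nal + nab := by
        have s := eR_submod M (A ∪ L) (A ∪ B)
        have u : eR M (A ∪ (B ∪ L)) ≤ eR M ((A ∪ L) ∪ (A ∪ B)) :=
          eR_mono M (by intro t ht; simp only [Set.mem_union] at ht ⊢; tauto)
        have i : eR M A ≤ eR M ((A ∪ L) ∩ (A ∪ B)) :=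
          eR_mono M (subset_inter subset_union_left subset_union_left)
        have := (add_le_add u i).trans s
        rw [hABL', hA', hAL', hAB'] at this; exact_mod_cast this
      have I2 : zbl + b ≤ nbl + zb := by
        have s := eR_submod M (B ∪ L) (Z ∪ B)
        have u : eR M (Z ∪ (B ∪ L)) ≤ eR M ((B ∪ L) ∪ (Z ∪ B)) :=
          eR_mono M (by intro t ht; simp only [Set.mem_union] at ht ⊢; tauto)
        have i : eR M B ≤ eR M ((B ∪ L) ∩ (Z ∪ B)) :=
          eR_mono M (subset_inter subset_union_left subset_union_right)
        have := (add_le_add u i).trans s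
        rw [hZBL', hB', hBL', hZB'] at this; exact_mod_cast this
      have I3 : zbl + 2 ≤ zl + nbl := by
        have s := eR_submod M (Z ∪ L) (B ∪ L)
        have u : eR M (Z ∪ (B ∪ L)) ≤ eR M ((Z ∪ L) ∪ (B ∪ L)) :=
          eR_mono M (by intro t ht; simp only [Set.mem_union] at ht ⊢; tauto)
        have i : eR M L ≤ eR M ((Z ∪ L) ∩ (B ∪ L)) :=
          eR_mono M (subset_inter subset_union_right subset_union_right)
        have := (add_le_add u i).trans s
        rw [hZBL', heL, hZL', hBL'] at this; exact_mod_cast this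
      have I4 : nabl + zl ≤ nal + zbl := by
        have s := eR_submod M (A ∪ L) (Z ∪ (B ∪ L))
        have u : eR M (A ∪ (B ∪ L)) ≤ eR M ((A ∪ L) ∪ (Z ∪ (B ∪ L))) :=
          eR_mono M (by intro t ht; simp only [Set.mem_union] at ht ⊢; tauto)
        have i : eR M (Z ∪ L) ≤ eR M ((A ∪ L) ∩ (Z ∪ (B ∪ L))) := by
          refine eR_mono M (subset_inter ?_ ?_)
          · exact union_subset (hZ.trans subset_union_left) subset_union_right
          · exact union_subset subset_union_left (subset_union_right.trans subset_union_right)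
        have := (add_le_add u i).trans s
        rw [hABL', hAL', hZL', hZBL'] at this; exact_mod_cast this
      rw [hZ', heL, hB', hZL', hZB', hBL', hZBL']
      simp only [ENat.toNat_top, ENat.toNat_coe]
      constructor <;> first | trivial | omega
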